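/- Let A=(a_ij) be an indecomposable, triply-laced symmetrizable GCM satisfying condition (★), with X_sh={p} a single index. If β_1,β_2∈W·α_p are real roots with ⟨β_1∨,β_2⟩=⟨β_2∨,β_1⟩=−1 (a pair of type A_2), then β_2−β_1 is a real root of A. Consequently there is no π-system of type A_2 in A contained wholly in the shortest real roots. -/
import Mathlib


/-- An integer matrix is a generalized Cartan matrix. -/
def IsGCM {n : ℕ} (A : Matrix (Fin n) (Fin n) ℤ) : Prop :=
  (∀ i, A i i = 2) ∧ (∀ i j, i ≠ j → A i j ≤ 0) ∧ (∀ i j, A i j = 0 → A j i = 0)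

/-- `d` is a symmetrizer of `A`: positive rationals with `dᵢ aᵢⱼ = dⱼ aⱼᵢ`. -/
def IsSymmetrizer {n : ℕ} (A : Matrix (Fin n) (Fin n) ℤ) (d : Fin n → ℚ) : Prop :=
  (∀ i, 0 < d i) ∧ ∀ i j, d i * A i j = d j * A j i

/-- The pairing `⟨γ∨, β⟩` between the coroot lattice and the root lattice:
in coordinates (γ in the coroot basis, β in the root basis) it is `∑ γᵢ aᵢⱼ βⱼ`,
so that `⟨αᵢ∨, αⱼ⟩ = aᵢⱼ`. -/
def pairing {n : ℕ} (A : Matrix (Fin n) (Fin n) ℤ) (y x : Fin n → ℤ) : ℤ :=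
  ∑ i, ∑ j, y i * A i j * x j

/-- Simple reflection `s_k` acting on the root lattice: `s_k x = x − ⟨α_k∨, x⟩ α_k`. -/
def sRoot {n : ℕ} (A : Matrix (Fin n) (Fin n) ℤ) (k : Fin n) (x : Fin n → ℤ) : Fin n → ℤ :=
  fun i => x i - (if i = k then ∑ j, A k j * x j else 0)

/-- Simple reflection `s_k` acting on the coroot lattice: `s_k(αⱼ∨) = αⱼ∨ − aⱼₖ α_k∨`. -/
def sCoroot {n : ℕ} (A : Matrix (Fin n) (Fin n) ℤ) (k : Fin n) (y : Fin n → ℤ) : Fin n → ℤ :=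
  fun i => y i - (if i = k then ∑ j, y j * A j k else 0)

/-- Action on the root lattice of a Weyl group element given as a word in simple reflections. -/
def actRoot {n : ℕ} (A : Matrix (Fin n) (Fin n) ℤ) (w : List (Fin n)) (x : Fin n → ℤ) :
    Fin n → ℤ :=
  w.foldr (sRoot A) x

/-- Action on the coroot lattice of a Weyl group element given as a word in simple reflections. -/
def actCoroot {n : ℕ} (A : Matrix (Fin n) (Fin n) ℤ) (w : List (Fin n)) (y : Fin n → ℤ) :
    Fin n → ℤ :=
  w.foldr (sCoroot A) y

/-- The invariant symmetric bilinear form on `Q ⊗ ℚ` determined by a symmetrizer `d`: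
`(αᵢ, αⱼ) = dᵢ aᵢⱼ`. -/
def formQ {n : ℕ} (A : Matrix (Fin n) (Fin n) ℤ) (d : Fin n → ℚ) (x y : Fin n → ℤ) : ℚ :=
  ∑ i, ∑ j, d i * (A i j : ℚ) * (x i : ℚ) * (y j : ℚ)

section Aux


variable {n : ℕ} (A : Matrix (Fin n) (Fin n) ℤ)

lemma pair_inv (h2 : ∀ i, A i i = 2) (k : Fin n) (y x : Fin n → ℤ) :
    pairing A (sCoroot A k y) (sRoot A k x) = pairing A y x := by
  unfold pairing sCoroot sRoot
  have expand : ∀ i j : Fin n,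
      (y i - (if i = k then ∑ j', y j' * A j' k else 0)) * A i j *
        (x j - (if j = k then ∑ j', A k j' * x j' else 0))
      = y i * A i j * x j
        - y i * A i j * (if j = k then ∑ j', A k j' * x j' else 0)
        - (if i = k then ∑ j', y j' * A j' k else 0) * A i j * x j
        + (if i = k then ∑ j', y j' * A j' k else 0) * A i j *
            (if j = k then ∑ j', A k j' * x j' else 0) := by
    intro i j; ring
  simp only [expand, Finset.sum_add_distrib, Finset.sum_sub_distrib]
  have e1 : ∑ i : Fin n, ∑ j : Fin n, y i * A i j * (if j = k then ∑ j', A k j' * x j' else 0)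
      = (∑ j', y j' * A j' k) * (∑ j', A k j' * x j') := by
    simp [mul_ite, mul_zero, Finset.sum_mul]
  have e2 : ∑ i : Fin n, ∑ j : Fin n,
      (if i = k then ∑ j', y j' * A j' k else 0) * A i j * x j
      = (∑ j', y j' * A j' k) * (∑ j', A k j' * x j') := by
    simp [ite_mul, zero_mul, Finset.mul_sum, mul_assoc]
  have e3 : ∑ i : Fin n, ∑ j : Fin n,
      (if i = k then ∑ j', y j' * A j' k else 0) * A i j *
        (if j = k then ∑ j', A k j' * x j' else 0)
      = 2 * ((∑ j', y j' * A j' k) * (∑ j', A k j' * x j')) := by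
    simp [ite_mul, mul_ite, zero_mul, mul_zero, h2]
    ring
  rw [e1, e2, e3]; ring


lemma form_inv (d : Fin n → ℚ) (h2 : ∀ i, A i i = 2)
    (hsym : ∀ i j, d i * A i j = d j * A j i) (k : Fin n) (x y : Fin n → ℤ) :
    formQ A d (sRoot A k x) (sRoot A k y) = formQ A d x y := by
  unfold formQ sRoot
  have cast_ite : ∀ (c : Prop) [Decidable c] (a : ℤ),
      (((if c then a else 0) : ℤ) : ℚ) = if c then (a : ℚ) else 0 := by
    intro c _ a; split <;> simp
  push_cast [cast_ite]
  set Sx : ℚ := ∑ j', (A k j' : ℚ) * (x j' : ℚ) with hSx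
  set Sy : ℚ := ∑ j', (A k j' : ℚ) * (y j' : ℚ) with hSy
  have expand : ∀ i j : Fin n,
      d i * (A i j : ℚ) * ((x i : ℚ) - (if i = k then Sx else 0)) *
        ((y j : ℚ) - (if j = k then Sy else 0))
      = d i * A i j * x i * y j
        - d i * A i j * (x i : ℚ) * (if j = k then Sy else 0)
        - d i * A i j * (if i = k then Sx else 0) * y j
        + d i * A i j * (if i = k then Sx else 0) * (if j = k then Sy else 0) := by
    intro i j; ring
  simp only [expand, Finset.sum_add_distrib, Finset.sum_sub_distrib]
  have symC : ∀ i, d i * (A i k : ℚ) = d k * (A k i : ℚ) := by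
    intro i
    have := hsym i k
    push_cast at this ⊢
    linarith
  have e1 : ∑ i : Fin n, ∑ j : Fin n, d i * (A i j:ℚ) * (x i:ℚ) * (if j = k then Sy else 0)
      = d k * Sx * Sy := by
    simp only [mul_ite, mul_zero, Finset.sum_ite_eq', Finset.mem_univ, if_true]
    have step : ∀ i : Fin n, d i * (A i k:ℚ) * (x i:ℚ) * Sy
        = d k * ((A k i:ℚ) * (x i:ℚ) * Sy) := by
      intro i
      rw [show d i * (A i k:ℚ) * (x i:ℚ) * Sy
        = (d i * (A i k:ℚ)) * ((x i:ℚ) * Sy) by ring, symC i]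
      ring
    rw [Finset.sum_congr rfl fun i _ => step i, ← Finset.mul_sum, ← Finset.sum_mul]
    rw [mul_assoc]
  have e2 : ∑ i : Fin n, ∑ j : Fin n, d i * (A i j:ℚ) * (if i = k then Sx else 0) * (y j:ℚ)
      = d k * Sx * Sy := by
    rw [Finset.sum_comm]
    simp only [mul_ite, mul_zero, ite_mul, zero_mul, Finset.sum_ite_eq', Finset.mem_univ,
      if_true]
    have step : ∀ j : Fin n, d k * (A k j:ℚ) * Sx * (y j:ℚ)
        = d k * Sx * ((A k j:ℚ) * (y j:ℚ)) := by intro j; ring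
    rw [Finset.sum_congr rfl fun j _ => step j, ← Finset.mul_sum]
  have e3 : ∑ i : Fin n, ∑ j : Fin n,
      d i * (A i j:ℚ) * (if i = k then Sx else 0) * (if j = k then Sy else 0)
      = 2 * (d k * Sx * Sy) := by
    simp only [mul_ite, mul_zero, ite_mul, zero_mul, Finset.sum_ite_eq', Finset.mem_univ,
      if_true]
    rw [h2 k]
    push_cast
    ring
  rw [e1, e2, e3]; ring

lemma sRoot_invol (h2 : ∀ i, A i i = 2) (k : Fin n) (x : Fin n → ℤ) :
    sRoot A k (sRoot A k x) = x := by
  funext i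
  unfold sRoot
  have inner : ∑ j, A k j * (x j - (if j = k then ∑ j', A k j' * x j' else 0))
      = - ∑ j, A k j * x j := by
    simp only [mul_sub, Finset.sum_sub_distrib, mul_ite, mul_zero, Finset.sum_ite_eq',
      Finset.mem_univ, if_true, h2 k]
    ring
  rw [inner]
  split <;> rename_i h
  · subst h; ring
  · ring

lemma sCoroot_invol (h2 : ∀ i, A i i = 2) (k : Fin n) (y : Fin n → ℤ) :
    sCoroot A k (sCoroot A k y) = y := by
  funext i
  unfold sCoroot
  have inner : ∑ j, (y j - (if j = k then ∑ j', y j' * A j' k else 0)) * A j k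
      = - ∑ j, y j * A j k := by
    simp only [sub_mul, Finset.sum_sub_distrib, ite_mul, zero_mul, Finset.sum_ite_eq',
      Finset.mem_univ, if_true, h2 k]
    ring
  rw [inner]
  split <;> rename_i h
  · subst h; ring
  · ring


lemma form_inv_word (d : Fin n → ℚ) (h2 : ∀ i, A i i = 2)
    (hsym : ∀ i j, d i * A i j = d j * A j i) (w : List (Fin n)) (x y : Fin n → ℤ) :
    formQ A d (actRoot A w x) (actRoot A w y) = formQ A d x y := by
  induction w with
  | nil => rfl
  | cons k w ih =>
    show formQ A d (sRoot A k (actRoot A w x)) (sRoot A k (actRoot A w y)) = _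
    rw [form_inv A d h2 hsym, ih]

lemma formQ_single_left (d : Fin n → ℚ) (p : Fin n) (x : Fin n → ℤ) :
    formQ A d (Pi.single p 1) x = d p * ∑ j, (A p j : ℚ) * (x j : ℚ) := by
  unfold formQ
  have hrow : ∀ i : Fin n,
      (∑ j, d i * (A i j:ℚ) * ((Pi.single p 1 : Fin n → ℤ) i : ℚ) * (x j : ℚ))
      = if i = p then d p * ∑ j, (A p j : ℚ) * (x j : ℚ) else 0 := by
    intro i
    by_cases h : i = p
    · subst h
      simp only [Pi.single_eq_same, Int.cast_one, mul_one, if_true, Finset.mul_sum]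
      exact Finset.sum_congr rfl fun j _ => by ring
    · simp [Pi.single_apply, h]
  rw [Finset.sum_congr rfl fun i _ => hrow i]
  simp

lemma pairing_single_left (p : Fin n) (x : Fin n → ℤ) :
    pairing A (Pi.single p 1) x = ∑ j, A p j * x j := by
  unfold pairing
  have hrow : ∀ i : Fin n,
      (∑ j, (Pi.single p 1 : Fin n → ℤ) i * A i j * x j)
      = if i = p then ∑ j, A p j * x j else 0 := by
    intro i
    by_cases h : i = p
    · subst h
      simp
    · simp [Pi.single_apply, h]
  rw [Finset.sum_congr rfl fun i _ => hrow i]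
  simp

/-- key link: `(w·α_p, x) = d_p ⟨w·α_p∨, x⟩`. -/
lemma form_eq_pairing (d : Fin n → ℚ) (h2 : ∀ i, A i i = 2)
    (hsym : ∀ i j, d i * A i j = d j * A j i) (p : Fin n) (w : List (Fin n)) :
    ∀ x : Fin n → ℤ,
      formQ A d (actRoot A w (Pi.single p 1)) x
        = d p * (pairing A (actCoroot A w (Pi.single p 1)) x : ℚ) := by
  induction w with
  | nil =>
    intro x
    show formQ A d (Pi.single p 1) x = d p * (pairing A (Pi.single p 1) x : ℚ)
    rw [formQ_single_left, pairing_single_left]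
    push_cast
    rfl
  | cons k w ih =>
    intro x
    show formQ A d (sRoot A k (actRoot A w (Pi.single p 1))) x
      = d p * (pairing A (sCoroot A k (actCoroot A w (Pi.single p 1))) x : ℚ)
    calc formQ A d (sRoot A k (actRoot A w (Pi.single p 1))) x
        = formQ A d (sRoot A k (actRoot A w (Pi.single p 1))) (sRoot A k (sRoot A k x)) := by
          rw [sRoot_invol A h2]
      _ = formQ A d (actRoot A w (Pi.single p 1)) (sRoot A k x) := by
          rw [form_inv A d h2 hsym]
      _ = d p * (pairing A (actCoroot A w (Pi.single p 1)) (sRoot A k x) : ℚ) := ih _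
      _ = d p * (pairing A (sCoroot A k (actCoroot A w (Pi.single p 1)))
            (sRoot A k (sRoot A k x)) : ℚ) := by rw [pair_inv A h2]
      _ = _ := by rw [sRoot_invol A h2]

lemma formQ_sub_left (d : Fin n → ℚ) (x y z : Fin n → ℤ) :
    formQ A d (x - y) z = formQ A d x z - formQ A d y z := by
  unfold formQ
  have e : ∀ i j : Fin n, d i * (A i j:ℚ) * (((x - y) i : ℤ):ℚ) * (z j:ℚ)
      = d i * A i j * x i * z j - d i * A i j * y i * z j := by
    intro i j
    simp only [Pi.sub_apply]
    push_cast
    ring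
  simp only [e, Finset.sum_sub_distrib]

lemma formQ_sub_right (d : Fin n → ℚ) (x y z : Fin n → ℤ) :
    formQ A d z (x - y) = formQ A d z x - formQ A d z y := by
  unfold formQ
  have e : ∀ i j : Fin n, d i * (A i j:ℚ) * (z i:ℚ) * (((x - y) j : ℤ):ℚ)
      = d i * A i j * z i * x j - d i * A i j * z i * y j := by
    intro i j
    simp only [Pi.sub_apply]
    push_cast
    ring
  simp only [e, Finset.sum_sub_distrib]

lemma formQ_single_single (d : Fin n → ℚ) (h2 : ∀ i, A i i = 2) (q : Fin n) :
    formQ A d (Pi.single q 1) (Pi.single q 1) = 2 * d q := by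
  rw [formQ_single_left]
  have : ∀ j : Fin n, (A q j : ℚ) * ((Pi.single q 1 : Fin n → ℤ) j : ℚ)
      = if j = q then (A q q : ℚ) else 0 := by
    intro j
    by_cases h : j = q
    · subst h; simp
    · simp [Pi.single_apply, h]
  rw [Finset.sum_congr rfl fun j _ => this j]
  simp [h2 q]
  ring

lemma formQ_zero (d : Fin n → ℚ) : formQ A d 0 0 = 0 := by
  simp [formQ]


lemma neg_factors {a b : ℤ} (ha : a ≤ 0) (hb : b ≤ 0) (h3 : a * b = 1 ∨ a * b = 3) :
    (a = -1 ∧ b = -1) ∨ (a = -1 ∧ b = -3) ∨ (a = -3 ∧ b = -1) := by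
  have hane : a ≠ 0 := by rintro rfl; simp at h3
  have hbne : b ≠ 0 := by rintro rfl; simp at h3
  have hdvd : a ∣ 3 := by
    rcases h3 with h | h
    · exact ⟨b * 3, by rw [← mul_assoc, h, one_mul]⟩
    · exact ⟨b, h.symm⟩
  have h2 : -a ≤ 3 := Int.le_of_dvd (by norm_num) ((neg_dvd).mpr hdvd)
  have h0 : -3 ≤ a := by linarith
  interval_cases a <;> omega

lemma pow3_struct (hA : IsGCM A) (d : Fin n → ℚ) (hd : IsSymmetrizer A d)
    (hind : ¬ ∃ I : Set (Fin n), I.Nonempty ∧ Iᶜ.Nonempty ∧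
      ∀ i ∈ I, ∀ j ∈ Iᶜ, A i j = 0)
    (hlaced : ∀ i j, i ≠ j → A i j * A j i = 0 ∨ A i j * A j i = 1 ∨ A i j * A j i = 3)
    (p : Fin n) (hsh : ∀ i, (∀ k, d i ≤ d k) ↔ i = p) :
    ∃ m : Fin n → ℕ, m p = 0 ∧ (∀ i, d i = 3 ^ (m i) * d p) ∧ (∀ i, i ≠ p → 1 ≤ m i) := by
  have hmin : ∀ k, d p ≤ d k := (hsh p).mpr rfl
  have hdpos := hd.1
  have huniv : ∀ i, ∃ m : ℕ, d i = 3 ^ m * d p := by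
    by_contra hcon
    push_neg at hcon
    obtain ⟨j0, hj0⟩ := hcon
    refine hind ⟨{i | ∃ m : ℕ, d i = 3 ^ m * d p}, ⟨p, ⟨0, by simp⟩⟩, ⟨j0, ?_⟩, ?_⟩
    · intro hj; obtain ⟨m, hm⟩ := hj; exact hj0 m hm
    · rintro i ⟨m, hm⟩ j hj
      by_contra hAij
      have hij : i ≠ j := by rintro rfl; exact hj ⟨m, hm⟩
      have hAji : A j i ≠ 0 := fun h => hAij (hA.2.2 j i h)
      have hprod : A i j * A j i = 1 ∨ A i j * A j i = 3 := by
        rcases hlaced i j hij with h | h | h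
        · exact absurd (mul_eq_zero.mp h) (by push_neg; exact ⟨hAij, hAji⟩)
        · exact Or.inl h
        · exact Or.inr h
      have hsymij := hd.2 i j
      rcases neg_factors (hA.2.1 i j hij) (hA.2.1 j i hij.symm) hprod with
        ⟨ha, hb⟩ | ⟨ha, hb⟩ | ⟨ha, hb⟩
      · -- d j = d i
        rw [ha, hb] at hsymij
        push_cast at hsymij
        have : d j = d i := by linarith
        exact hj ⟨m, by rw [this, hm]⟩
      · -- A i j = -1, A j i = -3 : d i = 3 d j
        rw [ha, hb] at hsymij
        push_cast at hsymij
        have hdj : d i = 3 * d j := by linarith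
        rcases Nat.eq_zero_or_pos m with rfl | hmpos
        · exfalso
          have := hmin j
          rw [hm] at hdj
          simp at hdj
          nlinarith [hdpos p]
        · obtain ⟨s, rfl⟩ : ∃ s, m = s + 1 := ⟨m - 1, by omega⟩
          refine hj ⟨s, ?_⟩
          have : (3:ℚ) * d j = 3 ^ (s+1) * d p := by rw [← hdj, hm]
          rw [pow_succ] at this
          nlinarith [this]
      · -- A i j = -3, A j i = -1 : d j = 3 d i
        rw [ha, hb] at hsymij
        push_cast at hsymij
        have hdj : d j = 3 * d i := by linarith
        exact hj ⟨m + 1, by rw [hdj, hm, pow_succ]; ring⟩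
  choose f hf using huniv
  refine ⟨fun i => if i = p then 0 else f i, by simp, fun i => ?_, fun i hip => ?_⟩
  · by_cases h : i = p
    · subst h; simp
    · simp only [if_neg h]; exact hf i
  · simp only [if_neg hip]
    rcases Nat.eq_zero_or_pos (f i) with h0 | h1
    · exfalso
      have hdi : d i = d p := by have := hf i; rw [h0] at this; simpa using this
      exact hip ((hsh i).mp (fun k => hdi ▸ hmin k))
    · exact h1

lemma form_int_rep (hA : IsGCM A) (d : Fin n → ℚ) (hd : IsSymmetrizer A d)
    (p : Fin n) (m : Fin n → ℕ) (hmp : m p = 0) (hm : ∀ i, d i = 3 ^ (m i) * d p)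
    (hm1 : ∀ i, i ≠ p → 1 ≤ m i) (x : Fin n → ℤ) :
    ∃ t : ℤ, formQ A d x x = d p * (t : ℚ) ∧ (3 : ℤ) ∣ (t - 2 * x p * x p) := by
  refine ⟨∑ i, ∑ j, 3 ^ (m i) * A i j * x i * x j, ?_, ?_⟩
  · unfold formQ
    push_cast
    rw [Finset.mul_sum]
    refine Finset.sum_congr rfl fun i _ => ?_
    rw [Finset.mul_sum]
    refine Finset.sum_congr rfl fun j _ => ?_
    rw [hm i]
    ring
  · -- 3 divides A p j for j ≠ p
    have hApj : ∀ j, j ≠ p → (3 : ℤ) ∣ A p j := by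
      intro j hj
      have hsymq := hd.2 p j
      rw [hm j] at hsymq
      have hdp : d p ≠ 0 := ne_of_gt (hd.1 p)
      have hcast : (A p j : ℚ) = (3:ℚ) ^ (m j) * (A j p : ℚ) := by
        apply mul_left_cancel₀ hdp
        rw [hsymq]
        ring
      obtain ⟨s, hs⟩ : ∃ s, m j = s + 1 := ⟨m j - 1, by have := hm1 j hj; omega⟩
      have : (A p j : ℤ) = 3 ^ (m j) * A j p := by exact_mod_cast hcast
      rw [this, hs, pow_succ]
      exact ⟨3 ^ s * A j p, by ring⟩
    have hsplit : ∀ s : Finset (Fin n), ∀ f : Fin n → ℤ, p ∈ s →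
        ∑ i ∈ s, f i = f p + ∑ i ∈ s.erase p, f i := by
      intro s f hp
      exact (Finset.add_sum_erase s f hp).symm
    rw [hsplit Finset.univ _ (Finset.mem_univ p)]
    rw [hsplit Finset.univ (fun j => 3 ^ (m p) * A p j * x p * x j) (Finset.mem_univ p)]
    rw [hmp, hA.1 p]
    have h1 : (3:ℤ) ∣ ∑ j ∈ Finset.univ.erase p, 3 ^ 0 * A p j * x p * x j := by
      refine Finset.dvd_sum fun j hj => ?_
      have := hApj j (Finset.ne_of_mem_erase hj)
      exact Dvd.dvd.mul_right (Dvd.dvd.mul_right (by simpa using this) _) _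
    have h2 : (3:ℤ) ∣ ∑ i ∈ Finset.univ.erase p, ∑ j, 3 ^ (m i) * A i j * x i * x j := by
      refine Finset.dvd_sum fun i hi => Finset.dvd_sum fun j _ => ?_
      have h3 : (3:ℤ) ∣ 3 ^ (m i) :=
        dvd_pow_self 3 (by have := hm1 i (Finset.ne_of_mem_erase hi); omega)
      exact Dvd.dvd.mul_right (Dvd.dvd.mul_right (Dvd.dvd.mul_right h3 _) _) _
    have : (3:ℤ)^0 * 2 * x p * x p + (∑ j ∈ Finset.univ.erase p, 3 ^ 0 * A p j * x p * x j)
        + (∑ i ∈ Finset.univ.erase p, ∑ j, 3 ^ (m i) * A i j * x i * x j)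
        - 2 * x p * x p
        = (∑ j ∈ Finset.univ.erase p, 3 ^ 0 * A p j * x p * x j)
        + (∑ i ∈ Finset.univ.erase p, ∑ j, 3 ^ (m i) * A i j * x i * x j) := by ring
    rw [this]
    exact dvd_add h1 h2

end Aux

/-- Let `A` be an indecomposable, triply-laced symmetrizable GCM satisfying
condition (★) (every nonzero `γ ∈ Q` with `(γ,γ) > 0` and `kⱼ(αⱼ,αⱼ)/(γ,γ) ∈ ℤ` for all
`j` is a real root), with `X_sh = {p}` a single index. If `β₁, β₂ ∈ W·α_p` pair as
`⟨β₁∨,β₂⟩ = ⟨β₂∨,β₁⟩ = −1` (type `A₂`), then `β₂ − β₁` is a real root; consequently there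
is no π-system of type `A₂` contained wholly in the shortest real roots. -/
theorem A2_short_diff_is_root_triply {n : ℕ} (A : Matrix (Fin n) (Fin n) ℤ) (hA : IsGCM A)
    (d : Fin n → ℚ) (hd : IsSymmetrizer A d)
    (hind : ¬ ∃ I : Set (Fin n), I.Nonempty ∧ Iᶜ.Nonempty ∧
      ∀ i ∈ I, ∀ j ∈ Iᶜ, A i j = 0)
    (hlaced : ∀ i j, i ≠ j → A i j * A j i = 0 ∨ A i j * A j i = 1 ∨ A i j * A j i = 3)
    (hattained : ∃ i j, i ≠ j ∧ A i j * A j i = 3)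
    (hstar : ∀ γ : Fin n → ℤ, γ ≠ 0 → 0 < formQ A d γ γ →
      (∀ j, ∃ c : ℤ, (γ j : ℚ) * formQ A d (Pi.single j 1) (Pi.single j 1)
          = (c : ℚ) * formQ A d γ γ) →
      ∃ (w : List (Fin n)) (q : Fin n), γ = actRoot A w (Pi.single q 1))
    (p : Fin n) (hsh : ∀ i, (∀ k, d i ≤ d k) ↔ i = p) :
    (∀ w₁ w₂ : List (Fin n),
      pairing A (actCoroot A w₁ (Pi.single p 1)) (actRoot A w₂ (Pi.single p 1)) = -1 →
      pairing A (actCoroot A w₂ (Pi.single p 1)) (actRoot A w₁ (Pi.single p 1)) = -1 →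
      ∃ (w : List (Fin n)) (q : Fin n),
        actRoot A w₂ (Pi.single p 1) - actRoot A w₁ (Pi.single p 1)
          = actRoot A w (Pi.single q 1))
    ∧
    ¬ ∃ w₁ w₂ : List (Fin n),
      pairing A (actCoroot A w₁ (Pi.single p 1)) (actRoot A w₂ (Pi.single p 1)) = -1 ∧
      pairing A (actCoroot A w₂ (Pi.single p 1)) (actRoot A w₁ (Pi.single p 1)) = -1 ∧
      ¬ ∃ (w : List (Fin n)) (q : Fin n),
        actRoot A w₂ (Pi.single p 1) - actRoot A w₁ (Pi.single p 1)
          = actRoot A w (Pi.single q 1) := by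
  obtain ⟨m, hmp, hm, hm1⟩ := pow3_struct A hA d hd hind hlaced p hsh
  have hdpos := hd.1
  have main : ∀ w₁ w₂ : List (Fin n),
      pairing A (actCoroot A w₁ (Pi.single p 1)) (actRoot A w₂ (Pi.single p 1)) = -1 →
      pairing A (actCoroot A w₂ (Pi.single p 1)) (actRoot A w₁ (Pi.single p 1)) = -1 →
      ∃ (w : List (Fin n)) (q : Fin n),
        actRoot A w₂ (Pi.single p 1) - actRoot A w₁ (Pi.single p 1)
          = actRoot A w (Pi.single q 1) := by
    intro w₁ w₂ hp1 hp2
    set β₁ := actRoot A w₁ (Pi.single p 1) with hb1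
    set β₂ := actRoot A w₂ (Pi.single p 1) with hb2
    have hself : ∀ w : List (Fin n),
        formQ A d (actRoot A w (Pi.single p 1)) (actRoot A w (Pi.single p 1)) = 2 * d p := by
      intro w
      rw [form_inv_word A d hA.1 hd.2, formQ_single_single A d hA.1]
    have h12 : formQ A d β₁ β₂ = - d p := by
      have := form_eq_pairing A d hA.1 hd.2 p w₁ β₂
      rw [hp1] at this
      rw [hb1, this]
      push_cast
      ring
    have h21 : formQ A d β₂ β₁ = - d p := by
      have := form_eq_pairing A d hA.1 hd.2 p w₂ β₁
      rw [hp2] at this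
      rw [hb2, this]
      push_cast
      ring
    have e22 : formQ A d β₂ β₂ = 2 * d p := hself w₂
    have e11 : formQ A d β₁ β₁ = 2 * d p := hself w₁
    have hγγ : formQ A d (β₂ - β₁) (β₂ - β₁) = 6 * d p := by
      simp only [formQ_sub_left, formQ_sub_right]
      linarith [h12, h21, e22, e11]
    have hne : β₂ - β₁ ≠ 0 := by
      intro h
      rw [h, formQ_zero] at hγγ
      linarith [hdpos p]
    have hpos : 0 < formQ A d (β₂ - β₁) (β₂ - β₁) := by
      rw [hγγ]; linarith [hdpos p]
    obtain ⟨t, ht, hdvd⟩ := form_int_rep A hA d hd p m hmp hm hm1 (β₂ - β₁)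
    have ht6 : t = 6 := by
      have h6 : d p * (t : ℚ) = d p * 6 := by rw [← ht, hγγ]; ring
      have := mul_left_cancel₀ (ne_of_gt (hdpos p)) h6
      exact_mod_cast this
    have h3p : (3 : ℤ) ∣ (β₂ - β₁) p := by
      rw [ht6] at hdvd
      have h2' : (3 : ℤ) ∣ ((β₂ - β₁) p) * ((β₂ - β₁) p) := by
        have hdd : (3:ℤ) ∣ 2 * (((β₂ - β₁) p) * ((β₂ - β₁) p)) := by
          obtain ⟨c, hc⟩ := hdvd
          exact ⟨2 - c, by linarith⟩
        have hp3 : Prime (3 : ℤ) := by norm_num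
        rcases hp3.dvd_mul.mp hdd with h | h
        · norm_num at h
        · exact h
      have hp3 : Prime (3 : ℤ) := by norm_num
      rcases hp3.dvd_mul.mp h2' with h | h <;> exact h
    have hint : ∀ j, ∃ c : ℤ, (((β₂ - β₁) j : ℤ) : ℚ)
        * formQ A d (Pi.single j 1) (Pi.single j 1)
        = (c : ℚ) * formQ A d (β₂ - β₁) (β₂ - β₁) := by
      intro j
      rw [formQ_single_single A d hA.1, hγγ]
      by_cases hj : j = p
      · subst hj
        obtain ⟨u, hu⟩ := h3p
        exact ⟨u, by rw [hu]; push_cast; ring⟩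
      · obtain ⟨s, hs⟩ : ∃ s, m j = s + 1 := ⟨m j - 1, by have := hm1 j hj; omega⟩
        refine ⟨(β₂ - β₁) j * 3 ^ s, ?_⟩
        rw [hm j, hs]
        push_cast
        ring
    exact hstar (β₂ - β₁) hne hpos hint
  refine ⟨main, ?_⟩
  rintro ⟨w₁, w₂, hq1, hq2, hno⟩
  exact hno (main w₁ w₂ hq1 hq2)
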